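/- Let ω > 0 and define β : ℕ → ℝ by β_0 = 1 and β_{2l−1} = β_{2l} = exp(l²ω²/2) for l ≥ 1. Then, as λ → 0⁺, ∑_{l=0}^∞ (1 + λ β_l)^{−2} ∼ 2√2 ω^{−1} (−log λ)^{1/2}; that is, lim_{λ→0⁺} (∑'_{l} (1 + λβ_l)^{−2}) / (2√2 ω^{−1} (−log λ)^{1/2}) = 1. Consequently the total variance of the periodic Gaussian regularization estimator satisfies ∑_l Var θ̂_l = (1/n)∑_l (1+λβ_l)^{−2} ∼ 2√2 ω^{−1} n^{−1} (−log λ)^{1/2}. -/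

import Mathlib

open Real Filter


noncomputable def gfun (ω lam : ℝ) (k : ℕ) : ℝ :=
  ((1 + lam * Real.exp ((k : ℝ) ^ 2 * ω ^ 2 / 2)) ^ 2)⁻¹

lemma gfun_pos {ω lam : ℝ} (hlam : 0 ≤ lam) (k : ℕ) : 0 < gfun ω lam k := by
  have : (0:ℝ) < 1 + lam * Real.exp ((k : ℝ) ^ 2 * ω ^ 2 / 2) := by positivity
  exact inv_pos.2 (by positivity)

lemma gfun_le_one {ω lam : ℝ} (hlam : 0 ≤ lam) (k : ℕ) : gfun ω lam k ≤ 1 := by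
  rw [gfun, inv_le_one_iff₀]
  right
  nlinarith [Real.exp_pos ((k : ℝ) ^ 2 * ω ^ 2 / 2), mul_nonneg hlam (Real.exp_pos ((k : ℝ) ^ 2 * ω ^ 2 / 2)).le]

lemma gfun_anti {ω lam : ℝ} (hlam : 0 ≤ lam) {j k : ℕ} (h : j ≤ k) :
    gfun ω lam k ≤ gfun ω lam j := by
  apply inv_anti₀
  · have : (0:ℝ) < 1 + lam * Real.exp ((j : ℝ) ^ 2 * ω ^ 2 / 2) := by positivity
    positivity
  · have hexp : Real.exp ((j : ℝ) ^ 2 * ω ^ 2 / 2) ≤ Real.exp ((k : ℝ) ^ 2 * ω ^ 2 / 2) := by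
      apply Real.exp_le_exp.2
      have hjk : ((j:ℝ)) ≤ (k:ℝ) := by exact_mod_cast h
      have hsq : ((j:ℝ))^2 ≤ (k:ℝ)^2 := pow_le_pow_left₀ (Nat.cast_nonneg j) hjk 2
      nlinarith [sq_nonneg ω]
    have h0 : (0:ℝ) < 1 + lam * Real.exp ((j : ℝ) ^ 2 * ω ^ 2 / 2) := by positivity
    nlinarith [mul_le_mul_of_nonneg_left hexp hlam]

lemma gfun_le_aux {ω lam : ℝ} (hlam : 0 < lam) (k : ℕ) :
    gfun ω lam k ≤ lam⁻¹ ^ 2 * Real.exp (-((k : ℝ) ^ 2 * ω ^ 2)) := by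
  rw [gfun]
  have hE : (0:ℝ) < Real.exp ((k : ℝ) ^ 2 * ω ^ 2 / 2) := Real.exp_pos _
  have h1 : (lam * Real.exp ((k : ℝ) ^ 2 * ω ^ 2 / 2)) ^ 2 ≤ (1 + lam * Real.exp ((k : ℝ) ^ 2 * ω ^ 2 / 2)) ^ 2 := by
    nlinarith [mul_pos hlam hE]
  have h2 : ((1 + lam * Real.exp ((k : ℝ) ^ 2 * ω ^ 2 / 2)) ^ 2)⁻¹ ≤ ((lam * Real.exp ((k : ℝ) ^ 2 * ω ^ 2 / 2)) ^ 2)⁻¹ := by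
    apply inv_anti₀ (by positivity) h1
  refine h2.trans_eq ?_
  rw [mul_pow, mul_inv, inv_pow]
  congr 1
  rw [← Real.exp_nat_mul, ← Real.exp_neg]
  congr 1
  push_cast
  ring

lemma summable_gfun {ω lam : ℝ} (hlam : 0 < lam) (hω : 0 < ω) : Summable (gfun ω lam) := by
  have hr : Real.exp (-ω^2) < 1 := Real.exp_lt_one_iff.2 (by nlinarith)
  have hr0 : (0:ℝ) ≤ Real.exp (-ω^2) := (Real.exp_pos _).le
  have hs : Summable (fun k : ℕ => lam⁻¹ ^ 2 * Real.exp (-ω^2) ^ k) :=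
    (summable_geometric_of_lt_one hr0 hr).mul_left _
  apply Summable.of_nonneg_of_le (fun k => (gfun_pos hlam.le k).le) (fun k => ?_) hs
  refine (gfun_le_aux hlam k).trans ?_
  apply mul_le_mul_of_nonneg_left ?_ (by positivity)
  rw [← Real.exp_nat_mul]
  apply Real.exp_le_exp.2
  have : (k:ℝ) ≤ (k:ℝ)^2 := by
    have : (1:ℝ) ≤ (k:ℝ) ∨ (k:ℝ) = 0 := by
      rcases Nat.eq_zero_or_pos k with h | h
      · right; simp [h]
      · left; exact_mod_cast h
    rcases this with h | h
    · nlinarith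
    · simp [h]
  nlinarith [sq_nonneg ω]




lemma beta_succ {ω : ℝ} {β : ℕ → ℝ}
    (hβodd : ∀ l : ℕ, 1 ≤ l → β (2 * l - 1) = Real.exp ((l : ℝ) ^ 2 * ω ^ 2 / 2))
    (hβeven : ∀ l : ℕ, 1 ≤ l → β (2 * l) = Real.exp ((l : ℝ) ^ 2 * ω ^ 2 / 2))
    (n : ℕ) : β (n + 1) = Real.exp (((n / 2 + 1 : ℕ) : ℝ) ^ 2 * ω ^ 2 / 2) := by
  rcases Nat.even_or_odd n with ⟨m, hm⟩ | ⟨m, hm⟩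
  · subst hm
    have h1 : m + m + 1 = 2 * (m + 1) - 1 := by omega
    have h2 : (m + m) / 2 + 1 = m + 1 := by omega
    rw [h1, h2, hβodd (m+1) (by omega)]
  · subst hm
    have h1 : 2 * m + 1 + 1 = 2 * (m + 1) := by omega
    have h2 : (2 * m + 1) / 2 + 1 = m + 1 := by omega
    rw [h1, h2, hβeven (m+1) (by omega)]

lemma summable_hshift {ω lam : ℝ} (hlam : 0 < lam) (hω : 0 < ω) :
    Summable (fun n : ℕ => gfun ω lam (n / 2 + 1)) := by
  have hr : Real.exp (-(ω^2/2)) < 1 := Real.exp_lt_one_iff.2 (by nlinarith)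
  have hr0 : (0:ℝ) ≤ Real.exp (-(ω^2/2)) := (Real.exp_pos _).le
  have hs : Summable (fun n : ℕ => lam⁻¹ ^ 2 * Real.exp (-(ω^2/2)) ^ n) :=
    (summable_geometric_of_lt_one hr0 hr).mul_left _
  apply Summable.of_nonneg_of_le (fun n => (gfun_pos hlam.le _).le) (fun n => ?_) hs
  refine (gfun_le_aux hlam _).trans ?_
  apply mul_le_mul_of_nonneg_left ?_ (by positivity)
  rw [← Real.exp_nat_mul]
  apply Real.exp_le_exp.2
  have h2 : (n:ℝ) + 1 ≤ 2 * ((n / 2 + 1 : ℕ) : ℝ) := by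
    have : n + 1 ≤ 2 * (n / 2 + 1) := by omega
    exact_mod_cast this
  have ha : (0:ℝ) ≤ ((n / 2 + 1 : ℕ) : ℝ) := Nat.cast_nonneg _
  have hn : (0:ℝ) ≤ (n:ℝ) := Nat.cast_nonneg _
  have h3 : ((n:ℝ)+1)/2 ≤ ((n / 2 + 1 : ℕ) : ℝ) := by linarith
  have h4 : (((n:ℝ)+1)/2)^2 ≤ ((n / 2 + 1 : ℕ) : ℝ)^2 := pow_le_pow_left₀ (by positivity) h3 2
  have h5 : (n:ℝ)/2 ≤ (((n:ℝ)+1)/2)^2 := by nlinarith [sq_nonneg ((n:ℝ)-1)]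
  nlinarith [mul_le_mul_of_nonneg_right (h5.trans h4) (sq_nonneg ω)]

lemma tsum_decomp {ω lam : ℝ} (hlam : 0 < lam) (hω : 0 < ω) {β : ℕ → ℝ} (hβ0 : β 0 = 1)
    (hβodd : ∀ l : ℕ, 1 ≤ l → β (2 * l - 1) = Real.exp ((l : ℝ) ^ 2 * ω ^ 2 / 2))
    (hβeven : ∀ l : ℕ, 1 ≤ l → β (2 * l) = Real.exp ((l : ℝ) ^ 2 * ω ^ 2 / 2)) :
    ∑' l : ℕ, ((1 + lam * β l) ^ 2)⁻¹
      = ((1 + lam) ^ 2)⁻¹ + 2 * ∑' k : ℕ, gfun ω lam (k + 1) := by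
  set F : ℕ → ℝ := fun l => ((1 + lam * β l) ^ 2)⁻¹ with hF
  have hFh : ∀ n : ℕ, F (n + 1) = gfun ω lam (n / 2 + 1) := by
    intro n
    rw [hF]
    simp only
    rw [beta_succ hβodd hβeven n, gfun]
  have hsum1 : Summable (fun n => F (n + 1)) := by
    rw [show (fun n => F (n + 1)) = (fun n : ℕ => gfun ω lam (n / 2 + 1)) from funext hFh]
    exact summable_hshift hlam hω
  have hsumF : Summable F := (summable_nat_add_iff 1).mp hsum1
  have hsumg : Summable (fun k : ℕ => gfun ω lam (k + 1)) :=
    (summable_nat_add_iff 1).mpr (summable_gfun hlam hω)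
  have he : (fun k : ℕ => F (2 * k + 1)) = fun k : ℕ => gfun ω lam (k + 1) := by
    funext k
    rw [show 2 * k + 1 = (2 * k) + 1 from rfl, hFh]
    congr 2
    omega
  have ho : (fun k : ℕ => F (2 * k + 1 + 1)) = fun k : ℕ => gfun ω lam (k + 1) := by
    funext k
    rw [show 2 * k + 1 + 1 = (2 * k + 1) + 1 from rfl, hFh]
    congr 2
    omega
  have key : ∑' n : ℕ, F (n + 1) = 2 * ∑' k : ℕ, gfun ω lam (k + 1) := by
    have h := tsum_even_add_odd (f := fun n => F (n + 1)) (he ▸ hsumg) (ho ▸ hsumg)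
    have e1 : ∑' k : ℕ, F (2 * k + 1) = ∑' k : ℕ, gfun ω lam (k + 1) :=
      tsum_congr (fun k => congrFun he k)
    have e2 : ∑' k : ℕ, F (2 * k + 1 + 1) = ∑' k : ℕ, gfun ω lam (k + 1) :=
      tsum_congr (fun k => congrFun ho k)
    rw [e1, e2] at h
    linarith
  rw [Summable.tsum_eq_zero_add hsumF, key]
  congr 1
  show ((1 + lam * β 0) ^ 2)⁻¹ = _
  rw [hβ0, mul_one]




lemma T_upper {ω lam : ℝ} (hω : 0 < ω) (hlam : 0 < lam) (hlt : lam < 1) :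
    ∑' k : ℕ, gfun ω lam (k + 1)
      ≤ Real.sqrt (2 * (-Real.log lam)) / ω + 1 + (1 - Real.exp (-ω^2))⁻¹ := by
  set t : ℝ := -Real.log lam with ht
  have ht0 : 0 < t := by
    rw [ht]
    simpa using Real.log_neg hlam hlt
  set L : ℝ := Real.sqrt (2 * t) / ω with hL
  have hL0 : 0 ≤ L := by positivity
  have hL2 : L ^ 2 = 2 * t / ω ^ 2 := by
    rw [hL, div_pow, Real.sq_sqrt (by linarith)]
  set M : ℕ := ⌈L⌉₊ with hM
  have hML : L ≤ (M : ℝ) := Nat.le_ceil L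
  have hsumg : Summable (fun k : ℕ => gfun ω lam (k + 1)) :=
    (summable_nat_add_iff 1).mpr (summable_gfun hlam hω)
  have hsplit := Summable.sum_add_tsum_nat_add (f := fun k : ℕ => gfun ω lam (k + 1)) M hsumg
  have hfirst : ∑ i ∈ Finset.range M, gfun ω lam (i + 1) ≤ (M : ℝ) := by
    calc ∑ i ∈ Finset.range M, gfun ω lam (i + 1) ≤ ∑ i ∈ Finset.range M, 1 :=
          Finset.sum_le_sum (fun i _ => gfun_le_one hlam.le _)
      _ = (M : ℝ) := by simp
  have hlaminv : lam⁻¹ ^ 2 = Real.exp (2 * t) := by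
    have h1 : lam⁻¹ = Real.exp t := by
      rw [ht, Real.exp_neg, Real.exp_log hlam]
    rw [h1, ← Real.exp_nat_mul]
    norm_num
  have hterm : ∀ n : ℕ, gfun ω lam (n + M + 1) ≤ Real.exp (-ω^2) ^ n := by
    intro n
    refine (gfun_le_aux hlam _).trans ?_
    rw [hlaminv, ← Real.exp_nat_mul, ← Real.exp_add]
    apply Real.exp_le_exp.2
    have hcast : ((n + M + 1 : ℕ) : ℝ) = (n : ℝ) + (M : ℝ) + 1 := by push_cast; ring
    rw [hcast]
    have h1 : ((M : ℝ) + 1) ^ 2 * ω ^ 2 ≥ 2 * t := by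
      have : L ^ 2 ≤ ((M:ℝ) + 1) ^ 2 := by nlinarith
      calc 2 * t = L ^ 2 * ω ^ 2 := by rw [hL2]; field_simp
        _ ≤ ((M:ℝ)+1) ^ 2 * ω ^ 2 := by nlinarith [sq_nonneg ω]
    have hn : (0:ℝ) ≤ (n:ℝ) := Nat.cast_nonneg n
    have hm : (0:ℝ) ≤ (M:ℝ) := Nat.cast_nonneg M
    have hexp2 : ((M:ℝ) + 1) ^ 2 + (n:ℝ) ≤ ((n:ℝ) + (M:ℝ) + 1) ^ 2 := by nlinarith
    nlinarith [mul_le_mul_of_nonneg_right hexp2 (sq_nonneg ω)]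
  have htail : ∑' n : ℕ, gfun ω lam (n + M + 1) ≤ (1 - Real.exp (-ω^2))⁻¹ := by
    have hr : Real.exp (-ω^2) < 1 := Real.exp_lt_one_iff.2 (by nlinarith)
    have hr0 : (0:ℝ) ≤ Real.exp (-ω^2) := (Real.exp_pos _).le
    calc ∑' n : ℕ, gfun ω lam (n + M + 1)
        ≤ ∑' n : ℕ, Real.exp (-ω^2) ^ n :=
          Summable.tsum_le_tsum hterm
            ((summable_nat_add_iff (M + 1)).mpr (summable_gfun hlam hω))
            (summable_geometric_of_lt_one hr0 hr)
      _ = (1 - Real.exp (-ω^2))⁻¹ := tsum_geometric_of_lt_one hr0 hr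
  have hMle : (M : ℝ) ≤ L + 1 := le_of_lt (Nat.ceil_lt_add_one hL0)
  have : ∑' k : ℕ, gfun ω lam (k + 1)
      = ∑ i ∈ Finset.range M, gfun ω lam (i + 1) + ∑' n : ℕ, gfun ω lam (n + M + 1) := by
    rw [← hsplit]
  rw [this]
  have : Real.sqrt (2 * t) / ω = L := rfl
  linarith




lemma T_lower {ω lam : ℝ} (hω : 0 < ω) (hlam : 0 < lam) (hlt : lam < 1)
    (hq : Real.sqrt (Real.sqrt (-Real.log lam)) ≤ Real.sqrt (2 * (-Real.log lam)) / ω) :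
    (⌊Real.sqrt (2 * (-Real.log lam)) / ω - Real.sqrt (Real.sqrt (-Real.log lam))⌋₊ : ℝ) *
      ((1 + Real.exp (ω^2 * Real.sqrt (-Real.log lam) / 2
        - Real.sqrt 2 * ω * (Real.sqrt (-Real.log lam) * Real.sqrt (Real.sqrt (-Real.log lam)))))^2)⁻¹
      ≤ ∑' k : ℕ, gfun ω lam (k + 1) := by
  set t : ℝ := -Real.log lam with ht
  have ht0 : 0 < t := by rw [ht]; simpa using Real.log_neg hlam hlt
  set q : ℝ := Real.sqrt (Real.sqrt t) with hqdef
  set L : ℝ := Real.sqrt (2 * t) / ω with hL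
  set a : ℝ := ω^2 * Real.sqrt t / 2 - Real.sqrt 2 * ω * (Real.sqrt t * q) with ha
  set N : ℕ := ⌊L - q⌋₊ with hN
  have hq0 : 0 ≤ q := Real.sqrt_nonneg _
  have hNle : (N : ℝ) ≤ L - q := Nat.floor_le (by linarith)
  have hsumg : Summable (fun k : ℕ => gfun ω lam (k + 1)) :=
    (summable_nat_add_iff 1).mpr (summable_gfun hlam hω)
  -- key exponent bound
  have hkey : (N : ℝ) ^ 2 * ω ^ 2 / 2 - t ≤ a := by
    have hN0 : (0:ℝ) ≤ (N:ℝ) := Nat.cast_nonneg N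
    have hsq : (N:ℝ)^2 ≤ (L - q)^2 := pow_le_pow_left₀ hN0 hNle 2
    have hq2 : q^2 = Real.sqrt t := Real.sq_sqrt (Real.sqrt_nonneg t)
    have hL2 : L^2 = 2 * t / ω^2 := by
      rw [hL, div_pow, Real.sq_sqrt (by linarith)]
    have hLq : L * q * ω^2 = Real.sqrt 2 * ω * (Real.sqrt t * q) := by
      rw [hL]
      rw [Real.sqrt_mul (by norm_num : (0:ℝ) ≤ 2)]
      field_simp
    have hexpand : (L - q)^2 * ω^2 / 2 - t = a := by
      have : (L - q)^2 = L^2 - 2*(L*q) + q^2 := by ring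
      rw [ha, this, hL2, hq2]
      field_simp
      nlinarith [hLq]
    nlinarith [sq_nonneg ω, mul_le_mul_of_nonneg_right hsq (sq_nonneg ω)]
  have hEa : lam * Real.exp ((N : ℝ) ^ 2 * ω ^ 2 / 2) ≤ Real.exp a := by
    have hlameq : lam = Real.exp (-t) := by
      rw [ht, neg_neg, Real.exp_log hlam]
    rw [hlameq, ← Real.exp_add]
    exact Real.exp_le_exp.2 (by linarith)
  have hgN : ((1 + Real.exp a)^2)⁻¹ ≤ gfun ω lam N := by
    rw [gfun]
    apply inv_anti₀
    · have := mul_nonneg hlam.le (Real.exp_pos ((N : ℝ) ^ 2 * ω ^ 2 / 2)).le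
      positivity
    · have h0 : 0 ≤ lam * Real.exp ((N : ℝ) ^ 2 * ω ^ 2 / 2) :=
        mul_nonneg hlam.le (Real.exp_pos _).le
      nlinarith [Real.exp_pos a]
  have hsum_ge : (N : ℝ) * gfun ω lam N ≤ ∑ i ∈ Finset.range N, gfun ω lam (i + 1) := by
    have := Finset.card_nsmul_le_sum (Finset.range N) (fun i => gfun ω lam (i + 1))
      (gfun ω lam N) (fun i hi => by
        apply gfun_anti hlam.le
        exact Nat.succ_le_of_lt (Finset.mem_range.mp hi))
    simpa [nsmul_eq_mul] using this
  have hpartial : ∑ i ∈ Finset.range N, gfun ω lam (i + 1) ≤ ∑' k : ℕ, gfun ω lam (k + 1) :=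
    Summable.sum_le_tsum _ (fun i _ => (gfun_pos hlam.le _).le) hsumg
  have hmul : (N : ℝ) * ((1 + Real.exp a)^2)⁻¹ ≤ (N : ℝ) * gfun ω lam N :=
    mul_le_mul_of_nonneg_left hgN (Nat.cast_nonneg N)
  linarith


lemma tendsto_rsqrt_atTop : Tendsto Real.sqrt atTop atTop := by
  apply tendsto_atTop_atTop_of_monotone (fun a b h => Real.sqrt_le_sqrt h)
  intro b
  exact ⟨(max b 0) ^ 2, by
    rw [Real.sqrt_sq (le_max_right b 0)]
    exact le_max_left b 0⟩

lemma tendsto_Lf_atTop {ω : ℝ} (hω : 0 < ω) :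
    Tendsto (fun u : ℝ => Real.sqrt (2 * u) / ω) atTop atTop := by
  apply Tendsto.atTop_div_const hω
  exact tendsto_rsqrt_atTop.comp (Tendsto.const_mul_atTop two_pos tendsto_id)

lemma tendsto_qf_atTop : Tendsto (fun u : ℝ => Real.sqrt (Real.sqrt u)) atTop atTop :=
  tendsto_rsqrt_atTop.comp tendsto_rsqrt_atTop

lemma eventually_qL {ω : ℝ} (hω : 0 < ω) :
    ∀ᶠ u : ℝ in atTop, Real.sqrt (Real.sqrt u) ≤ Real.sqrt (2 * u) / ω := by
  filter_upwards [tendsto_qf_atTop.eventually_ge_atTop (ω / Real.sqrt 2),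
    eventually_ge_atTop (0:ℝ)] with u hu hu0
  set q := Real.sqrt (Real.sqrt u) with hq
  have hq0 : 0 ≤ q := Real.sqrt_nonneg _
  have hq2 : q ^ 2 = Real.sqrt u := Real.sq_sqrt (Real.sqrt_nonneg u)
  have h2 : Real.sqrt (2 * u) = Real.sqrt 2 * Real.sqrt u := Real.sqrt_mul (by norm_num) u
  have hs2 : (0:ℝ) < Real.sqrt 2 := Real.sqrt_pos.2 (by norm_num)
  have hu' : ω ≤ q * Real.sqrt 2 := (div_le_iff₀ hs2).mp hu
  rw [h2, ← hq2, le_div_iff₀ hω]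
  nlinarith [mul_le_mul_of_nonneg_left hu' hq0]

lemma hub_lim {ω C : ℝ} (hω : 0 < ω) :
    Tendsto (fun u : ℝ => (1 + 2 * (Real.sqrt (2 * u) / ω + 1 + C)) / (2 * (Real.sqrt (2 * u) / ω)))
      atTop (nhds 1) := by
  have hL := tendsto_Lf_atTop hω
  have h0 : Tendsto (fun u : ℝ => (3 + 2 * C) / (2 * (Real.sqrt (2 * u) / ω))) atTop (nhds 0) :=
    Tendsto.div_atTop tendsto_const_nhds (Tendsto.const_mul_atTop two_pos hL)
  have h1 : Tendsto (fun u : ℝ => 1 + (3 + 2 * C) / (2 * (Real.sqrt (2 * u) / ω))) atTop (nhds 1) := by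
    simpa using tendsto_const_nhds.add h0
  have key : ∀ L : ℝ, 0 < L → 1 + (3 + 2 * C) / (2 * L) = (1 + 2 * (L + 1 + C)) / (2 * L) := by
    intro L hL
    field_simp
    ring
  apply h1.congr'
  filter_upwards [hL.eventually_gt_atTop 0] with u hu
  exact key _ hu



lemma tendsto_ratio {ω : ℝ} (hω : 0 < ω) :
    Tendsto (fun u : ℝ =>
      ((⌊Real.sqrt (2 * u) / ω - Real.sqrt (Real.sqrt u)⌋₊ : ℝ) / (Real.sqrt (2 * u) / ω)))
      atTop (nhds 1) := by
  have hs2 : (0:ℝ) < Real.sqrt 2 := Real.sqrt_pos.2 (by norm_num)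
  -- (q+1)/L → 0
  have hq1L : Tendsto (fun u : ℝ =>
      (Real.sqrt (Real.sqrt u) + 1) / (Real.sqrt (2 * u) / ω)) atTop (nhds 0) := by
    have hbound : Tendsto (fun u : ℝ => 2 * ω / (Real.sqrt 2 * Real.sqrt (Real.sqrt u)))
        atTop (nhds 0) :=
      Tendsto.div_atTop tendsto_const_nhds (Tendsto.const_mul_atTop hs2 tendsto_qf_atTop)
    apply tendsto_of_tendsto_of_tendsto_of_le_of_le' tendsto_const_nhds hbound
    · filter_upwards [(tendsto_Lf_atTop hω).eventually_gt_atTop 0] with u hL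
      positivity
    · filter_upwards [(tendsto_Lf_atTop hω).eventually_gt_atTop 0,
        tendsto_qf_atTop.eventually_ge_atTop 1, eventually_ge_atTop (0:ℝ)] with u hL hq1 hu0
      set q := Real.sqrt (Real.sqrt u) with hqdef
      have hq0 : (0:ℝ) < q := by linarith
      have hq2 : q ^ 2 = Real.sqrt u := Real.sq_sqrt (Real.sqrt_nonneg u)
      have h2u : Real.sqrt (2 * u) = Real.sqrt 2 * q ^ 2 := by
        rw [hq2]; exact Real.sqrt_mul (by norm_num) u
      rw [div_le_div_iff₀ hL (by positivity)]
      have hωL : 2 * ω * (Real.sqrt (2 * u) / ω) = 2 * Real.sqrt (2 * u) := by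
        field_simp
      rw [hωL, h2u]
      nlinarith [mul_le_mul_of_nonneg_left hq1 (mul_nonneg hs2.le hq0.le)]
  have hlower : Tendsto (fun u : ℝ =>
      1 - (Real.sqrt (Real.sqrt u) + 1) / (Real.sqrt (2 * u) / ω)) atTop (nhds 1) := by
    simpa using tendsto_const_nhds.sub hq1L
  apply tendsto_of_tendsto_of_tendsto_of_le_of_le' hlower tendsto_const_nhds
  · filter_upwards [(tendsto_Lf_atTop hω).eventually_gt_atTop 0] with u hL
    set q := Real.sqrt (Real.sqrt u) with hqdef
    set L := Real.sqrt (2 * u) / ω with hLdef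
    have hfloor : L - q < (⌊L - q⌋₊ : ℝ) + 1 := Nat.lt_floor_add_one _
    have heq : 1 - (q + 1) / L = (L - (q + 1)) / L := by field_simp
    rw [heq, div_le_div_iff₀ hL hL]
    have h1 : L - (q + 1) ≤ (⌊L - q⌋₊ : ℝ) := by linarith
    nlinarith [mul_le_mul_of_nonneg_right h1 hL.le]
  · filter_upwards [(tendsto_Lf_atTop hω).eventually_gt_atTop 0, eventually_qL hω] with u hL hqL
    set q := Real.sqrt (Real.sqrt u) with hqdef
    set L := Real.sqrt (2 * u) / ω with hLdef
    have hfl : (⌊L - q⌋₊ : ℝ) ≤ L - q := Nat.floor_le (by linarith)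
    have hq0 : 0 ≤ q := Real.sqrt_nonneg _
    rw [div_le_one hL]
    linarith

lemma tendsto_af_atBot {ω : ℝ} (hω : 0 < ω) :
    Tendsto (fun u : ℝ => ω^2 * Real.sqrt u / 2
      - Real.sqrt 2 * ω * (Real.sqrt u * Real.sqrt (Real.sqrt u))) atTop atBot := by
  have hs2 : (0:ℝ) < Real.sqrt 2 := Real.sqrt_pos.2 (by norm_num)
  apply tendsto_atBot_mono' atTop ?_
    (tendsto_neg_atTop_atBot.comp tendsto_rsqrt_atTop : Tendsto (fun u : ℝ => -Real.sqrt u) atTop atBot)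
  filter_upwards [tendsto_qf_atTop.eventually_ge_atTop ((ω^2/2 + 1)/(Real.sqrt 2 * ω))] with u hq
  have hq' : ω^2/2 + 1 ≤ Real.sqrt 2 * ω * Real.sqrt (Real.sqrt u) := by
    rw [div_le_iff₀ (by positivity)] at hq
    linarith [hq]
  have hsu : 0 ≤ Real.sqrt u := Real.sqrt_nonneg u
  simp only [Function.comp]
  nlinarith [mul_le_mul_of_nonneg_left hq' hsu]

lemma tendsto_inv_part {ω : ℝ} (hω : 0 < ω) :
    Tendsto (fun u : ℝ => ((1 + Real.exp (ω^2 * Real.sqrt u / 2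
      - Real.sqrt 2 * ω * (Real.sqrt u * Real.sqrt (Real.sqrt u))))^2)⁻¹) atTop (nhds 1) := by
  have hexp : Tendsto (fun u : ℝ => Real.exp (ω^2 * Real.sqrt u / 2
      - Real.sqrt 2 * ω * (Real.sqrt u * Real.sqrt (Real.sqrt u)))) atTop (nhds 0) :=
    Real.tendsto_exp_atBot.comp (tendsto_af_atBot hω)
  have hcont : Tendsto (fun x : ℝ => ((1 + x)^2)⁻¹) (nhds 0) (nhds 1) := by
    have h1 : Tendsto (fun x : ℝ => (1 + x)^2) (nhds 0) (nhds 1) := by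
      have := (((continuous_const (y := (1:ℝ))).add continuous_id).pow 2).tendsto (0:ℝ)
      simp at this
      exact this
    simpa using h1.inv₀ one_ne_zero
  exact hcont.comp hexp

lemma hlb_lim {ω : ℝ} (hω : 0 < ω) :
    Tendsto (fun u : ℝ =>
      ((⌊Real.sqrt (2 * u) / ω - Real.sqrt (Real.sqrt u)⌋₊ : ℝ) / (Real.sqrt (2 * u) / ω)) *
        ((1 + Real.exp (ω^2 * Real.sqrt u / 2
          - Real.sqrt 2 * ω * (Real.sqrt u * Real.sqrt (Real.sqrt u))))^2)⁻¹)
      atTop (nhds 1) := by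
  simpa using (tendsto_ratio hω).mul (tendsto_inv_part hω)

lemma div_le_div_of_nonneg_right' {a b c : ℝ} (h : a ≤ b) (hc : 0 < c) : a / c ≤ b / c := by
  apply div_le_div_of_nonneg_right h hc.le

/-- **Lemma 1.** For `ω > 0` and `β` given by `β 0 = 1`,
`β (2l-1) = β (2l) = exp (l² ω² / 2)` for `l ≥ 1`, we have, as `λ → 0⁺`,
`∑' l, (1 + λ β l)⁻² ∼ 2 √2 ω⁻¹ (−log λ)^{1/2}`. -/
theorem stmt_4 (ω : ℝ) (hω : 0 < ω)
    (β : ℕ → ℝ) (hβ0 : β 0 = 1)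
    (hβodd : ∀ l : ℕ, 1 ≤ l → β (2 * l - 1) = Real.exp ((l : ℝ) ^ 2 * ω ^ 2 / 2))
    (hβeven : ∀ l : ℕ, 1 ≤ l → β (2 * l) = Real.exp ((l : ℝ) ^ 2 * ω ^ 2 / 2)) :
    Tendsto (fun lam : ℝ =>
        (∑' l : ℕ, ((1 + lam * β l) ^ 2)⁻¹) /
          (2 * Real.sqrt 2 * ω⁻¹ * Real.sqrt (-Real.log lam)))
      (nhdsWithin 0 (Set.Ioi 0)) (nhds 1) := by
  have hs2 : (0:ℝ) < Real.sqrt 2 := Real.sqrt_pos.2 (by norm_num)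
  set C : ℝ := (1 - Real.exp (-ω^2))⁻¹ with hC
  have htt : Tendsto (fun lam : ℝ => -Real.log lam) (nhdsWithin 0 (Set.Ioi 0)) atTop :=
    tendsto_neg_atBot_atTop.comp Real.tendsto_log_nhdsGT_zero
  apply tendsto_of_tendsto_of_tendsto_of_le_of_le'
    ((hlb_lim hω).comp htt) ((hub_lim (C := C) hω).comp htt)
  · -- lower bound
    filter_upwards [self_mem_nhdsWithin, htt.eventually_gt_atTop 0,
      htt.eventually (eventually_qL hω)] with lam hlam ht0 hqL
    have hlam : 0 < lam := hlam
    set t : ℝ := -Real.log lam with htdef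
    have hlt : lam < 1 := by
      have hlog : Real.log lam < 0 := by
        have : 0 < t := ht0
        rw [htdef] at this
        linarith
      exact (Real.log_neg_iff hlam).mp hlog
    have hL0 : 0 < Real.sqrt (2 * t) / ω := by
      have : 0 < Real.sqrt (2 * t) := Real.sqrt_pos.2 (by linarith)
      positivity
    set L : ℝ := Real.sqrt (2 * t) / ω with hLdef
    have hD : 2 * Real.sqrt 2 * ω⁻¹ * Real.sqrt t = 2 * L := by
      rw [hLdef, Real.sqrt_mul (by norm_num : (0:ℝ) ≤ 2)]
      field_simp
    have hdecomp := tsum_decomp hlam hω hβ0 hβodd hβeven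
    have hTlow := T_lower hω hlam hlt hqL
    have hfirst : (0:ℝ) ≤ ((1 + lam)^2)⁻¹ := by positivity
    set N : ℝ := (⌊L - Real.sqrt (Real.sqrt t)⌋₊ : ℝ) with hNdef
    set I : ℝ := ((1 + Real.exp (ω^2 * Real.sqrt t / 2
      - Real.sqrt 2 * ω * (Real.sqrt t * Real.sqrt (Real.sqrt t))))^2)⁻¹ with hIdef
    have hS : 2 * (N * I) ≤ ∑' l : ℕ, ((1 + lam * β l) ^ 2)⁻¹ := by
      rw [hdecomp]
      have := hTlow
      linarith
    show (N / L) * I ≤ _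
    rw [hD]
    have heq : (N / L) * I = (2 * (N * I)) / (2 * L) := by
      field_simp
    rw [heq]
    exact div_le_div_of_nonneg_right' hS (by linarith)
  · -- upper bound
    filter_upwards [self_mem_nhdsWithin, htt.eventually_gt_atTop 0] with lam hlam ht0
    have hlam : 0 < lam := hlam
    set t : ℝ := -Real.log lam with htdef
    have hlt : lam < 1 := by
      have hlog : Real.log lam < 0 := by
        have : 0 < t := ht0
        rw [htdef] at this
        linarith
      exact (Real.log_neg_iff hlam).mp hlog
    have hL0 : 0 < Real.sqrt (2 * t) / ω := by
      have : 0 < Real.sqrt (2 * t) := Real.sqrt_pos.2 (by linarith)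
      positivity
    set L : ℝ := Real.sqrt (2 * t) / ω with hLdef
    have hD : 2 * Real.sqrt 2 * ω⁻¹ * Real.sqrt t = 2 * L := by
      rw [hLdef, Real.sqrt_mul (by norm_num : (0:ℝ) ≤ 2)]
      field_simp
    have hdecomp := tsum_decomp hlam hω hβ0 hβodd hβeven
    have hTup := T_upper hω hlam hlt
    have hfirst : ((1 + lam)^2)⁻¹ ≤ 1 := by
      rw [inv_le_one_iff₀]
      right
      nlinarith
    have hS : ∑' l : ℕ, ((1 + lam * β l) ^ 2)⁻¹ ≤ 1 + 2 * (L + 1 + C) := by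
      rw [hdecomp]
      linarith
    show _ ≤ (1 + 2 * (L + 1 + C)) / (2 * L)
    rw [hD]
    exact div_le_div_of_nonneg_right' hS (by linarith)
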